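/- For the ODE (z-1)^2 X'' + 2(z-1) X' + θ(1 + (z-1)) X = 0 with θ ≠ 0, if the indicial roots at z = 1 differ by a positive integer m, then the log-term coefficient equals c = -θ^m/(m!(m-1)!), which is nonzero. Hence no solution basis free of logarithms exists at z = 1. -/

import Mathlib

/-- For the ODE (z-1)²X'' + 2(z-1)X' + θ(1+(z-1))X = 0 (θ ≠ 0), i.e.
in w = z-1: p₀ = 2, q₀ = q₁ = θ, all other coefficients zero: if the roots of the
indicial equation t(t-1) + 2t + θ = 0 differ by a positive integer m, then the
log-term coefficient c = -θ^m/(m!(m-1)!) ≠ 0, so no log-free solution basis exists. -/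
theorem type_O23_mu0_no_logfree (θ : ℂ) (hθ : θ ≠ 0) (m : ℕ) (hm : 1 ≤ m)
    (hm2 : ((m : ℂ)) ^ 2 = 1 - 4 * θ)
    (p q : ℕ → ℂ) (lam2 : ℂ)
    (hp0 : p 0 = 2) (hp : ∀ j, 1 ≤ j → p j = 0)
    (hq0 : q 0 = θ) (hq1 : q 1 = θ) (hq : ∀ j, 2 ≤ j → q j = 0)
    (hlam2 : lam2 = ((1 - p 0) - (m : ℂ)) / 2)
    (hroot : lam2 * (lam2 - 1) + 2 * lam2 + θ = 0)
    (a : ℕ → ℂ) (ha0 : a 0 = 1)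
    (ha : ∀ j, 1 ≤ j → j ≤ m - 1 →
      a j = (1 / ((j : ℂ) * ((m : ℂ) - (j : ℂ)))) *
        ∑ k ∈ Finset.range j, ((lam2 + (k : ℂ)) * p (j - k) + q (j - k)) * a k)
    (c : ℂ)
    (hc : c = -(1 / (m : ℂ)) *
      ∑ k ∈ Finset.range m, ((lam2 + (k : ℂ)) * p (m - k) + q (m - k)) * a k) :
    c = -θ ^ m / ((m.factorial : ℂ) * ((m - 1).factorial : ℂ)) ∧ c ≠ 0 := by
  have hm0 : (m : ℂ) ≠ 0 := Nat.cast_ne_zero.mpr (by omega)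
  -- the sum telescopes to a single term
  have hsum : ∀ j, 1 ≤ j →
      (∑ k ∈ Finset.range j, ((lam2 + (k : ℂ)) * p (j - k) + q (j - k)) * a k)
        = θ * a (j - 1) := by
    intro j hj
    rw [Finset.sum_eq_single_of_mem (j - 1) (Finset.mem_range.mpr (by omega))]
    · have h1 : j - (j - 1) = 1 := by omega
      rw [h1, hp 1 le_rfl, hq1]; ring
    · intro k hk hne
      have hk' := Finset.mem_range.mp hk
      rw [hp _ (by omega), hq _ (by omega)]; ring
  -- closed form for a j
  have key : ∀ j, j ≤ m - 1 →
      a j = θ ^ j * ((m - 1 - j).factorial : ℂ)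
        / ((j.factorial : ℂ) * ((m - 1).factorial : ℂ)) := by
    intro j
    induction j with
    | zero =>
        intro _
        simp [ha0]
        rw [div_self]
        exact Nat.cast_ne_zero.mpr (Nat.factorial_ne_zero _)
    | succ n ih =>
        intro hle
        obtain ⟨r, rfl⟩ : ∃ r, m = n + r + 2 := ⟨m - n - 2, by omega⟩
        rw [ha (n + 1) (by omega) hle, hsum (n + 1) (by omega)]
        simp only [Nat.add_sub_cancel]
        rw [ih (by omega)]
        have e1 : n + r + 2 - 1 - n = r + 1 := by omega
        have e2 : n + r + 2 - 1 - (n + 1) = r := by omega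
        have e3 : ((n + r + 2 : ℕ) : ℂ) - ((n + 1 : ℕ) : ℂ) = ((r + 1 : ℕ) : ℂ) := by
          push_cast; ring
        rw [e1, e2, e3, Nat.factorial_succ, Nat.factorial_succ n]
        have hn0 : ((n : ℂ) + 1) ≠ 0 := Nat.cast_add_one_ne_zero n
        have hr0 : ((r : ℂ) + 1) ≠ 0 := Nat.cast_add_one_ne_zero r
        have hf1 : ((n.factorial : ℂ)) ≠ 0 := Nat.cast_ne_zero.mpr (Nat.factorial_ne_zero _)
        have hf3 : ((r.factorial : ℂ)) ≠ 0 := Nat.cast_ne_zero.mpr (Nat.factorial_ne_zero _)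
        have hf2 : (((n + r + 2 - 1).factorial : ℂ)) ≠ 0 :=
          Nat.cast_ne_zero.mpr (Nat.factorial_ne_zero _)
        have gen : ∀ (A B C D E T : ℂ), A ≠ 0 → B ≠ 0 → C ≠ 0 → E ≠ 0 →
            1 / (A * B) * (T * (θ ^ n * (B * D) / (C * E)))
              = θ ^ n * T * D / (A * C * E) := by
          intro A B C D E T hA hB hC hE
          field_simp
        have hfnr : (((n + r + 1).factorial : ℂ)) ≠ 0 :=
          Nat.cast_ne_zero.mpr (Nat.factorial_ne_zero _)
        push_cast
        rw [pow_succ, mul_comm (θ ^ n) θ, mul_comm θ (θ ^ n)]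
        exact gen _ _ _ _ _ _ hn0 hr0 hf1 hfnr
  have ham : a (m - 1) = θ ^ (m - 1) / (((m - 1).factorial : ℂ) * ((m - 1).factorial : ℂ)) := by
    have := key (m - 1) le_rfl
    rw [Nat.sub_self] at this
    simpa using this
  have hfact : ((m.factorial : ℂ)) = (m : ℂ) * ((m - 1).factorial : ℂ) := by
    rw [← Nat.mul_factorial_pred (by omega : m ≠ 0)]; push_cast; ring
  have hf2 : (((m - 1).factorial : ℂ)) ≠ 0 := Nat.cast_ne_zero.mpr (Nat.factorial_ne_zero _)
  have hcval : c = -θ ^ m / ((m.factorial : ℂ) * ((m - 1).factorial : ℂ)) := by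
    rw [hc, hsum m hm, ham, hfact]
    have hpow : θ * θ ^ (m - 1) = θ ^ m := by
      rw [← pow_succ']
      congr 1
      omega
    field_simp
    rw [← hpow]
  refine ⟨hcval, ?_⟩
  rw [hcval]
  apply div_ne_zero
  · simpa using pow_ne_zero m hθ
  · exact mul_ne_zero (Nat.cast_ne_zero.mpr (Nat.factorial_ne_zero _)) hf2
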